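/- arXiv:2505.15002 — 2 statements merged into one kernel-verified Lean document; each statement's English description precedes it below -/
import Mathlib

section
/- In the category PSet of sets and partial functions, for f : A ⇀ B ⊔ A, the iteration iterate f : A ⇀ B defined by iterate f (a) = b whenever there exists n with [ι_B, f]ⁿ(ι_A a) = ι_B b (and undefined otherwise) satisfies the fixed point equation [id_B, iterate f] ∘ f = iterate f. -/
/-!
In the category of sets and partial functions, the iteration
`iterate f : A ⇀ B` of a partial function `f : A ⇀ B ⊔ A`, defined by
`iterate f a = b` whenever some finite iterate of `[ι_B, f]` sends `ι_A a` to
`ι_B b`, satisfies the fixed point equation `[id_B, iterate f] ∘ f = iterate f`.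
-/

universe u v

variable {α : Type u} {β : Type v}

/-- The copairing `[ι_B, f] : B ⊔ A ⇀ B ⊔ A` of the coproduct injection `ι_B`
with `f : A ⇀ B ⊔ A`. -/
def pstep (f : α →. β ⊕ α) : β ⊕ α →. β ⊕ α :=
  fun x => Sum.elim (fun b => Part.some (Sum.inl b)) f x

/-- The `n`-fold composite `[ι_B, f]ⁿ` of the partial function `pstep f`. -/
def pstepPow (f : α →. β ⊕ α) : ℕ → (β ⊕ α →. β ⊕ α)
  | 0 => fun x => Part.some x
  | n + 1 => PFun.comp (pstep f) (pstepPow f n)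

/-- The iteration `iterate f : A ⇀ B` of `f : A ⇀ B ⊔ A`: defined at `a` with value
`b` precisely when `[ι_B, f]ⁿ (ι_A a) = ι_B b` for some `n` (and undefined
otherwise). -/
noncomputable def psetIterate (f : α →. β ⊕ α) : α →. β :=
  fun a =>
    ⟨∃ n b, Sum.inl b ∈ pstepPow f n (Sum.inr a),
      fun h => Classical.choose (Classical.choose_spec h)⟩

lemma pstepPow_inl (f : α →. β ⊕ α) (n : ℕ) (b : β) :
    pstepPow f n (Sum.inl b) = Part.some (Sum.inl b) := by
  induction n with
  | zero => rfl
  | succ n ih =>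
      simp only [pstepPow, PFun.comp_apply, ih, Part.bind_some]
      exact Part.bind_some (Sum.inl b) (pstep f)

lemma pstepPow_succ' (f : α →. β ⊕ α) (n : ℕ) :
    pstepPow f (n + 1) = PFun.comp (pstepPow f n) (pstep f) := by
  induction n with
  | zero =>
      funext x
      simp [pstepPow, PFun.comp_apply]
      exact (Part.bind_some x (pstep f)).trans (Part.bind_some_right (pstep f x)).symm
  | succ n ih =>
      calc PFun.comp (pstep f) (pstepPow f (n + 1))
          = PFun.comp (pstep f) (PFun.comp (pstepPow f n) (pstep f)) := by rw [ih]
        _ = PFun.comp (PFun.comp (pstep f) (pstepPow f n)) (pstep f) :=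
            (PFun.comp_assoc _ _ _).symm

lemma pstepPow_add_mem (f : α →. β ⊕ α) {x : β ⊕ α} {n : ℕ} {b : β}
    (h : Sum.inl b ∈ pstepPow f n x) (k : ℕ) : Sum.inl b ∈ pstepPow f (n + k) x := by
  induction k with
  | zero => exact h
  | succ k ih =>
      show Sum.inl b ∈ PFun.comp (pstep f) (pstepPow f (n + k)) x
      erw [PFun.comp_apply, Part.mem_bind_iff]
      exact ⟨Sum.inl b, ih, Part.mem_some _⟩

lemma inl_unique (f : α →. β ⊕ α) {x : β ⊕ α} {n m : ℕ} {b b' : β}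
    (h : Sum.inl b ∈ pstepPow f n x) (h' : Sum.inl b' ∈ pstepPow f m x) : b = b' := by
  wlog hnm : n ≤ m generalizing n m b b'
  · exact (this h' h (le_of_not_ge hnm)).symm
  obtain ⟨k, rfl⟩ := Nat.exists_eq_add_of_le hnm
  exact Sum.inl.inj (Part.mem_unique (pstepPow_add_mem f h k) h')

lemma mem_psetIterate_iff (f : α →. β ⊕ α) (a : α) (b : β) :
    b ∈ psetIterate f a ↔ ∃ n, Sum.inl b ∈ pstepPow f n (Sum.inr a) := by
  constructor
  · rintro ⟨h, rfl⟩
    have hspec := Classical.choose_spec (Classical.choose_spec h)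
    exact ⟨_, hspec⟩
  · rintro ⟨n, hn⟩
    have hdom : ∃ n b, Sum.inl b ∈ pstepPow f n (Sum.inr a) := ⟨n, b, hn⟩
    refine ⟨hdom, ?_⟩
    have hspec := Classical.choose_spec (Classical.choose_spec hdom)
    exact (inl_unique f hspec hn)

/-- **Fixed point equation for iteration in `PSet`.**
`[id_B, iterate f] ∘ f = iterate f`, where `[id_B, iterate f]` is the copairing
of the identity partial function on `B` with `iterate f`, and `∘` is composition
of partial functions. -/
theorem psetIterate_fixed_point (f : α →. β ⊕ α) :
    (PFun.comp (Sum.elim (fun b => Part.some b) (psetIterate f) : β ⊕ α →. β) f) =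
      psetIterate f := by
  funext a
  apply Part.ext
  intro b
  erw [PFun.comp_apply, Part.mem_bind_iff, mem_psetIterate_iff]
  constructor
  · rintro ⟨c, hc, hb⟩
    cases c with
    | inl b' =>
        have : b = b' := Part.mem_unique hb (Part.mem_some _)
        subst this
        refine ⟨1, ?_⟩
        show Sum.inl b ∈ PFun.comp (pstep f) (pstepPow f 0) (Sum.inr a)
        erw [PFun.comp_apply, Part.mem_bind_iff]
        exact ⟨Sum.inr a, Part.mem_some _, hc⟩
    | inr a' =>
        obtain ⟨n, hn⟩ := (mem_psetIterate_iff f a' b).1 hb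
        refine ⟨n + 1, ?_⟩
        erw [pstepPow_succ', PFun.comp_apply, Part.mem_bind_iff]
        exact ⟨Sum.inr a', hc, hn⟩
  · rintro ⟨n, hn⟩
    cases n with
    | zero => exact absurd (Part.mem_some_iff.1 hn) (by simp)
    | succ n =>
        erw [pstepPow_succ', PFun.comp_apply, Part.mem_bind_iff] at hn
        obtain ⟨c, hc, hb⟩ := hn
        cases c with
        | inl b' =>
            rw [pstepPow_inl] at hb
            have : b = b' := Sum.inl.inj (Part.mem_some_iff.1 hb)
            subst this
            exact ⟨Sum.inl b, hc, Part.mem_some _⟩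
        | inr a' =>
            exact ⟨Sum.inr a', hc, (mem_psetIterate_iff f a' b).2 ⟨n, hb⟩⟩
end

section
/- Let L : C^op → Cat be a strictly indexed category such that C has finite coproducts. Then L is binary-coproduct-extensive (L sends binary coproducts in C to binary products in Cat) with L(W) nonempty for some object W if and only if L is finite-coproduct-extensive (L additionally sends the initial object of C to the terminal category). -/
/-!
For a strictly indexed category `L : Cᵒᵖ ⥤ Cat` where `C` has finite coproducts:
`L` is binary-coproduct-extensive with some nonempty fiber iff `L` is
finite-coproduct-extensive (i.e. additionally `L(0) ≅ 1`).
-/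

open CategoryTheory Limits Opposite

universe v u u₂

variable {C : Type u} [Category.{v} C] [HasBinaryCoproducts C] [HasInitial C]

/-- The canonical comparison functor `L(A ⊔ B) ⟶ L(A) × L(B)` induced by the
coproduct injections, as a morphism in `Cat`. -/
noncomputable def extComparison (L : Cᵒᵖ ⥤ Cat.{u₂, u₂}) (A B : C) :
    L.obj (op (A ⨿ B)) ⟶ Cat.of (↑(L.obj (op A)) × ↑(L.obj (op B))) :=
  (Functor.prod' (L.map (coprod.inl : A ⟶ A ⨿ B).op).toFunctor
    (L.map (coprod.inr : B ⟶ A ⨿ B).op).toFunctor).toCatHom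

/-- `L` is binary-coproduct-extensive: every comparison functor
`L(A ⊔ B) ⟶ L(A) × L(B)` is an isomorphism of categories. -/
def BinaryExtensive (L : Cᵒᵖ ⥤ Cat.{u₂, u₂}) : Prop :=
  ∀ A B : C, IsIso (extComparison L A B)

/-- **Binary extensivity + a nonempty fiber = finite extensivity.**
`L` is binary-coproduct-extensive with `L(W)` nonempty for some `W` iff `L` is
finite-coproduct-extensive, i.e. binary-coproduct-extensive and `L(0)` is
isomorphic (in `Cat`) to the terminal category. -/
theorem binaryExtensive_nonempty_iff_finiteExtensive (L : Cᵒᵖ ⥤ Cat.{u₂, u₂}) :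
    (BinaryExtensive L ∧ ∃ W : C, Nonempty ↑(L.obj (op W))) ↔
      (BinaryExtensive L ∧
        Nonempty (L.obj (op (⊥_ C)) ≅ Cat.of (Discrete PUnit.{u₂ + 1}))) := by
  constructor
  · rintro ⟨hbin, W, ⟨w⟩⟩
    refine ⟨hbin, ?_⟩
    let d0 : ↑(L.obj (op (⊥_ C))) := (L.map (initial.to W).op).toFunctor.obj w
    have hP : IsIso (extComparison L (⊥_ C) (⊥_ C)) := hbin (⊥_ C) (⊥_ C)
    set G : L.obj (op ((⊥_ C) ⨿ (⊥_ C))) ⟶ L.obj (op (⊥_ C)) :=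
      L.map (coprod.inl : ⊥_ C ⟶ _).op with hG
    have hinr : (coprod.inr : ⊥_ C ⟶ (⊥_ C) ⨿ (⊥_ C)) = coprod.inl := initial.hom_ext _ _
    have hPG : extComparison L (⊥_ C) (⊥_ C) = (Functor.prod' G.toFunctor G.toFunctor).toCatHom := by
      simp only [extComparison, hinr, hG]
      rfl
    set P := extComparison L (⊥_ C) (⊥_ C) with hPdef
    set Q := CategoryTheory.inv P with hQ
    have hQP : Q ≫ P = 𝟙 _ := IsIso.inv_hom_id P
    rw [hPG] at hQP
    have h1 : Q.toFunctor ⋙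
        Functor.prod' G.toFunctor G.toFunctor = 𝟭 _ := congrArg Cat.Hom.toFunctor hQP
    have hcf : Functor.prod' G.toFunctor G.toFunctor ⋙ CategoryTheory.Prod.fst _ _ = G.toFunctor := rfl
    have hcs : Functor.prod' G.toFunctor G.toFunctor ⋙ CategoryTheory.Prod.snd _ _ = G.toFunctor := rfl
    have hf : Q.toFunctor ⋙ G.toFunctor = CategoryTheory.Prod.fst _ _ := by
      rw [← hcf, ← Functor.assoc, h1]
      exact Functor.id_comp _
    have hs : Q.toFunctor ⋙ G.toFunctor = CategoryTheory.Prod.snd _ _ := by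
      rw [← hcs, ← Functor.assoc, h1]
      exact Functor.id_comp _
    have hfs : CategoryTheory.Prod.fst ↑(L.obj (op (⊥_ C))) ↑(L.obj (op (⊥_ C))) =
        CategoryTheory.Prod.snd _ _ := by rw [← hf, hs]
    have hobj : ∀ d e : ↑(L.obj (op (⊥_ C))), d = e := fun d e =>
      Functor.congr_obj hfs (d, e)
    have hhom : ∀ (d e : ↑(L.obj (op (⊥_ C)))) (g h : d ⟶ e), g = h := by
      intro d e g h
      have := Functor.congr_hom hfs (X := (d, d)) (Y := (e, e)) (g, h)
      simpa using this
    refine ⟨⟨(Functor.star _).toCatHom, (Functor.fromPUnit d0).toCatHom, ?_, ?_⟩⟩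
    · apply Cat.ext
      show Functor.star.{u₂} ↑(L.obj (op (⊥_ C))) ⋙ Functor.fromPUnit d0 = 𝟭 _
      exact CategoryTheory.Functor.ext (fun X => hobj _ _) (fun X Y f => hhom _ _ _ _)
    · apply Cat.ext
      show Functor.fromPUnit d0 ⋙ Functor.star _ = 𝟭 (Discrete PUnit.{u₂+1})
      exact CategoryTheory.Functor.ext (fun X => Subsingleton.elim _ _)
        (fun X Y f => Subsingleton.elim _ _)
  · rintro ⟨hbin, ⟨e⟩⟩
    exact ⟨hbin, ⟨⊥_ C, ⟨e.inv.toFunctor.obj ⟨PUnit.unit⟩⟩⟩⟩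
end
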